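/- Let V₁, ..., V_n be independent nonnegative random variables, σ a uniformly random permutation of {1,...,n} independent of the V_i, τ a real threshold, and T = min{i : V_{σ(i)} > τ} the first time the revealed value exceeds τ. Then for each i with P(V_i > τ) > 0, P(σ(T) = i | V_i > τ) = (p / F_i(τ)) · Σ_{S ⊆ [n]\{i}} (1/(|S|+1)) · Π_{j∈S} (1 - F_j(τ))/F_j(τ), where F_j is the CDF of V_j, p = Π_{j∈[n]} F_j(τ), assuming F_j(τ) > 0 for all j. -/

import Mathlib

open MeasureTheory ProbabilityTheory

/-- Stopping time of the time-threshold algorithm (1-based time): the first time `k ∈ [1,n]`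
at which the revealed value `V_{σ(k)}` strictly exceeds the threshold `τ k`, and `n+1`
(meaning "never stops") if no such time exists. -/
noncomputable def stopT {Ω : Type*} {n : ℕ} (V : Fin n → Ω → ℝ) (τ : ℕ → ℝ)
    (σ : Ω → Equiv.Perm (Fin n)) (ω : Ω) : ℕ :=
  sInf ({k : ℕ | ∃ j : Fin n, (j : ℕ) + 1 = k ∧ τ k < V (σ ω j) ω} ∪ {n + 1})


section Aux
open intervalIntegral

lemma Jval (b a : ℕ) : ∫ x in (0:ℝ)..1, x^a * (1-x)^b
    = (a.factorial * b.factorial : ℝ) / (a+b+1).factorial := by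
  induction b generalizing a with
  | zero =>
    simp only [pow_zero, mul_one, integral_pow, Nat.add_zero]
    rw [one_pow, zero_pow (by omega), Nat.factorial_succ]
    push_cast
    have ha : (a:ℝ)+1 ≠ 0 := by positivity
    have hf : (a.factorial:ℝ) ≠ 0 := by positivity
    field_simp
    norm_num
  | succ b IH =>
    have key : ∫ x in (0:ℝ)..1, ((a+1:ℝ) * (x^a * (1-x)^(b+1)) - (b+1:ℝ) * (x^(a+1) * (1-x)^b)) = 0 := by
      have hd : ∀ x ∈ Set.uIcc (0:ℝ) 1,
          HasDerivAt (fun x : ℝ => x^(a+1) * (1-x)^(b+1))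
            ((a+1:ℝ) * (x^a * (1-x)^(b+1)) - (b+1:ℝ) * (x^(a+1) * (1-x)^b)) x := by
        intro x _
        have h1 : HasDerivAt (fun x : ℝ => x^(a+1)) ((a+1:ℝ) * x^a) x := by
          simpa using (hasDerivAt_pow (a+1) x)
        have h2 : HasDerivAt (fun x : ℝ => (1-x)^(b+1)) (-((b+1:ℝ) * (1-x)^b)) x := by
          have := ((hasDerivAt_pow (b+1) (1-x)).comp x ((hasDerivAt_id x).const_sub 1))
          simpa [Function.comp_def] using this
        have : HasDerivAt (fun x : ℝ => x^(a+1) * (1-x)^(b+1)) _ x := h1.mul h2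
        convert this using 1
        ring
      have hint : IntervalIntegrable (fun x : ℝ =>
          ((a+1:ℝ) * (x^a * (1-x)^(b+1)) - (b+1:ℝ) * (x^(a+1) * (1-x)^b))) MeasureTheory.volume 0 1 :=
        (Continuous.intervalIntegrable (by continuity) 0 1)
      rw [integral_eq_sub_of_hasDerivAt hd hint]
      norm_num
    have i1 : IntervalIntegrable (fun x : ℝ => x^a * (1-x)^(b+1)) MeasureTheory.volume 0 1 :=
      Continuous.intervalIntegrable (by continuity) 0 1
    have i2 : IntervalIntegrable (fun x : ℝ => x^(a+1) * (1-x)^b) MeasureTheory.volume 0 1 :=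
      Continuous.intervalIntegrable (by continuity) 0 1
    rw [integral_sub (i1.const_mul _) (i2.const_mul _), intervalIntegral.integral_const_mul, intervalIntegral.integral_const_mul,
      sub_eq_zero] at key
    have ha : (a:ℝ)+1 ≠ 0 := by positivity
    have : ∫ x in (0:ℝ)..1, x^a * (1-x)^(b+1)
        = ((b:ℝ)+1) / ((a:ℝ)+1) * ∫ x in (0:ℝ)..1, x^(a+1) * (1-x)^b := by
      field_simp
      rw [mul_comm] at key
      linarith [key]
    rw [this, IH (a+1)]
    have h2 : ((a + 1 + b + 1).factorial : ℝ) ≠ 0 := by positivity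
    have e1 : (a+1).factorial = (a+1) * a.factorial := Nat.factorial_succ a
    have e2 : (b+1).factorial = (b+1) * b.factorial := Nat.factorial_succ b
    have e3 : a + 1 + b + 1 = a + (b+1) + 1 := by ring
    rw [e1, e3] at *
    push_cast [e2]
    rw [← e3]
    field_simp


lemma sumL {ι : Type*} [DecidableEq ι] (G : Finset ι) (x : ι → ℝ) :
    ∑ S ∈ G.powerset, ((S.card.factorial * (G.card - S.card).factorial : ℝ)
        / (G.card + 1).factorial) * ∏ j ∈ S, x j
      = ∫ t in (0:ℝ)..1, ∏ j ∈ G, ((1-t) + t * x j) := by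
  have expand : ∀ t : ℝ, ∏ j ∈ G, ((1-t) + t * x j)
      = ∑ S ∈ G.powerset, (t ^ S.card * (1-t) ^ (G.card - S.card)) * ∏ j ∈ S, x j := by
    intro t
    rw [Finset.prod_congr rfl (fun j _ => add_comm (1-t) (t * x j)), Finset.prod_add]
    refine Finset.sum_congr rfl fun S hS => ?_
    rw [Finset.prod_const, Finset.prod_mul_distrib, Finset.prod_const,
      Finset.card_sdiff_of_subset (Finset.mem_powerset.mp hS)]
    ring
  rw [intervalIntegral.integral_congr (g := fun t => ∑ S ∈ G.powerset,
      (t ^ S.card * (1-t) ^ (G.card - S.card)) * ∏ j ∈ S, x j) (fun t _ => expand t)]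
  rw [intervalIntegral.integral_finset_sum (fun S _ => Continuous.intervalIntegrable (by continuity) 0 1)]
  refine Finset.sum_congr rfl fun S hS => ?_
  rw [intervalIntegral.integral_mul_const, Jval]
  have : S.card + (G.card - S.card) + 1 = G.card + 1 := by
    have := Finset.card_le_card (Finset.mem_powerset.mp hS); omega
  rw [this]

lemma sumR {ι : Type*} [DecidableEq ι] (G : Finset ι) (x : ι → ℝ) :
    ∑ S ∈ G.powerset, (1 / (S.card + 1) : ℝ) * ((∏ j ∈ S, (1 - x j)) * ∏ j ∈ G \ S, x j)
      = ∫ t in (0:ℝ)..1, ∏ j ∈ G, (x j + t * (1 - x j)) := by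
  have expand : ∀ t : ℝ, ∏ j ∈ G, (x j + t * (1 - x j))
      = ∑ S ∈ G.powerset, t ^ S.card * ((∏ j ∈ S, (1 - x j)) * ∏ j ∈ G \ S, x j) := by
    intro t
    rw [Finset.prod_congr rfl (fun j _ => add_comm (x j) (t * (1 - x j))), Finset.prod_add]
    refine Finset.sum_congr rfl fun S hS => ?_
    rw [Finset.prod_mul_distrib, Finset.prod_const]
    ring
  rw [intervalIntegral.integral_congr (g := fun t => ∑ S ∈ G.powerset,
      t ^ S.card * ((∏ j ∈ S, (1 - x j)) * ∏ j ∈ G \ S, x j)) (fun t _ => expand t)]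
  rw [intervalIntegral.integral_finset_sum (fun S _ => Continuous.intervalIntegrable (by continuity) 0 1)]
  refine Finset.sum_congr rfl fun S hS => ?_
  rw [intervalIntegral.integral_mul_const, integral_pow]
  norm_num

lemma combIdent {ι : Type*} [DecidableEq ι] (G : Finset ι) (x : ι → ℝ) :
    ∑ S ∈ G.powerset, ((S.card.factorial * (G.card - S.card).factorial : ℝ)
        / (G.card + 1).factorial) * ∏ j ∈ S, x j
      = ∑ S ∈ G.powerset, (1 / (S.card + 1) : ℝ) * ((∏ j ∈ S, (1 - x j)) * ∏ j ∈ G \ S, x j) := by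
  rw [sumL, sumR]
  have : ∀ t : ℝ, ∏ j ∈ G, ((1-t) + t * x j) = (fun u => ∏ j ∈ G, (x j + u * (1 - x j))) (1 - t) := by
    intro t
    refine Finset.prod_congr rfl fun j _ => by ring
  rw [intervalIntegral.integral_congr (fun t _ => this t),
    intervalIntegral.integral_comp_sub_left (fun u => ∏ j ∈ G, (x j + u * (1 - x j))) 1]
  norm_num

lemma hfiltercard {n : ℕ} (t : Fin n) :
    (Finset.univ.filter fun j : Fin n => (j:ℕ) < (t:ℕ)).card = (t:ℕ) := by
  have h : (Finset.univ.filter fun j : Fin n => (j:ℕ) < (t:ℕ)) = Finset.Iio t := by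
    ext j
    rw [Finset.mem_filter, Finset.mem_Iio, Fin.lt_def]
    simp only [Finset.mem_univ, true_and]
  rw [h, Fin.card_Iio]

lemma fiberCard {n : ℕ} (i : Fin n) (S : Finset (Fin n)) (hS : S ⊆ Finset.univ.erase i) :
    (Finset.univ.filter (fun π : Equiv.Perm (Fin n) =>
        (Finset.univ.filter fun j' : Fin n => (j' : ℕ) < ((π.symm i : Fin n) : ℕ)).image π = S)).card
      = S.card.factorial * (n - 1 - S.card).factorial := by
  classical
  have hn : 0 < n := i.pos
  have hcard_erase : (Finset.univ.erase i).card = n - 1 := by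
    rw [Finset.card_erase_of_mem (Finset.mem_univ i), Finset.card_univ, Fintype.card_fin]
  have hs_le : S.card ≤ n - 1 := hcard_erase ▸ Finset.card_le_card hS
  have hsn : S.card < n := by omega
  set s := S.card with hs_def
  set k0 : Fin n := ⟨s, hsn⟩ with hk0
  set T : Finset (Fin n) := (Finset.univ.erase i) \ S with hT
  have hTcard : T.card = n - 1 - s := by
    rw [hT, Finset.card_sdiff_of_subset hS, hcard_erase]
  set P : Equiv.Perm (Fin n) → Prop :=
    fun π => π.symm i = k0 ∧ ∀ j : Fin n, (j:ℕ) < s → π j ∈ S with hP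
  -- characterization
  have hchar : ∀ π : Equiv.Perm (Fin n),
      ((Finset.univ.filter fun j' : Fin n => (j' : ℕ) < ((π.symm i : Fin n) : ℕ)).image π = S)
      ↔ P π := by
    intro π
    constructor
    · intro h
      have hc : ((π.symm i : Fin n) : ℕ) = s := by
        have h1 := Finset.card_image_of_injective
          (Finset.univ.filter fun j' : Fin n => (j' : ℕ) < ((π.symm i : Fin n) : ℕ)) π.injective
        rw [h, hfiltercard] at h1
        exact h1.symm
      refine ⟨Fin.ext hc, fun j hj => ?_⟩
      rw [← h]
      exact Finset.mem_image_of_mem π (by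
        rw [Finset.mem_filter]
        exact ⟨Finset.mem_univ j, by omega⟩)
    · rintro ⟨h1, h2⟩
      have hc : ((π.symm i : Fin n) : ℕ) = s := by rw [h1]
      apply Finset.eq_of_subset_of_card_le
      · intro x hx
        obtain ⟨j, hj, hjx⟩ := Finset.mem_image.mp hx
        rw [Finset.mem_filter] at hj
        exact hjx ▸ h2 j (by omega)
      · rw [Finset.card_image_of_injective _ π.injective, hfiltercard, hc]
  -- key facts about π satisfying P
  have hPk0 : ∀ π : Equiv.Perm (Fin n), P π → π k0 = i := by
    intro π hπ
    rw [← hπ.1, Equiv.apply_symm_apply]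
  have hPT : ∀ π : Equiv.Perm (Fin n), P π → ∀ a : Fin n, s < (a:ℕ) → π a ∈ T := by
    intro π hπ a ha
    have hSimg : (Finset.univ.filter fun j : Fin n => (j:ℕ) < s).image π = S := by
      apply Finset.eq_of_subset_of_card_le
      · intro x hx
        obtain ⟨j, hj, hjx⟩ := Finset.mem_image.mp hx
        rw [Finset.mem_filter] at hj
        exact hjx ▸ hπ.2 j hj.2
      · rw [Finset.card_image_of_injective _ π.injective]
        have := hfiltercard k0
        simp only [hk0] at this
        rw [this]
    have hne : π a ≠ i := by
      intro hcon
      have : a = k0 := by rw [← hπ.1, ← hcon, Equiv.symm_apply_apply]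
      rw [this] at ha
      simp [hk0] at ha
    have hnS : π a ∉ S := by
      intro hcon
      rw [← hSimg] at hcon
      obtain ⟨j, hj, hjx⟩ := Finset.mem_image.mp hcon
      rw [Finset.mem_filter] at hj
      have : j = a := π.injective hjx
      omega
    rw [hT, Finset.mem_sdiff, Finset.mem_erase]
    exact ⟨⟨hne, Finset.mem_univ _⟩, hnS⟩
  -- membership facts
  have hiS : i ∉ S := fun h => absurd (hS h) (by simp)
  have hiT : i ∉ T := by
    rw [hT, Finset.mem_sdiff, Finset.mem_erase]
    tauto
  have hST : ∀ x, x ∈ T → x ∉ S := by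
    intro x hx
    rw [hT, Finset.mem_sdiff] at hx
    exact hx.2
  -- the equivalence
  have cA1 : Fintype.card {a : Fin n // (a:ℕ) < s} = s := by
    rw [Fintype.card_subtype]
    exact hfiltercard k0
  have cA2 : Fintype.card {a : Fin n // s < (a:ℕ)} = n - 1 - s := by
    rw [Fintype.card_subtype]
    have h : (Finset.univ.filter fun j : Fin n => s < (j:ℕ)) = Finset.Ioi k0 := by
      ext j
      rw [Finset.mem_filter, Finset.mem_Ioi, Fin.lt_def]
      simp only [Finset.mem_univ, true_and]
      exact Iff.rfl
    rw [h, Fin.card_Ioi]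
  have cB1 : Fintype.card {x : Fin n // x ∈ S} = s := by rw [Fintype.card_coe]
  have cB2 : Fintype.card {x : Fin n // x ∈ T} = n - 1 - s := by rw [Fintype.card_coe, hTcard]
  have Φ : {π : Equiv.Perm (Fin n) // P π} ≃
      (({a : Fin n // (a:ℕ) < s} ≃ {x : Fin n // x ∈ S}) ×
       ({a : Fin n // s < (a:ℕ)} ≃ {x : Fin n // x ∈ T})) := by
    refine
      { toFun := fun ⟨π, hπ⟩ =>
          (Equiv.ofBijective (fun a => ⟨π a.1, hπ.2 a.1 a.2⟩)
            ((Fintype.bijective_iff_injective_and_card _).mpr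
              ⟨fun a b hab => Subtype.ext (π.injective (congrArg Subtype.val hab)),
               cA1.trans cB1.symm⟩),
           Equiv.ofBijective (fun a => ⟨π a.1, hPT π hπ a.1 a.2⟩)
            ((Fintype.bijective_iff_injective_and_card _).mpr
              ⟨fun a b hab => Subtype.ext (π.injective (congrArg Subtype.val hab)),
               cA2.trans cB2.symm⟩))
        invFun := fun ⟨e1, e2⟩ => ?_
        left_inv := ?_
        right_inv := ?_ }
    · -- construct the permutation
      have finj : Function.Injective (fun j : Fin n =>
          if h : (j:ℕ) < s then (e1 ⟨j, h⟩ : Fin n)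
          else if h' : s < (j:ℕ) then (e2 ⟨j, h'⟩ : Fin n) else i) := by
        intro a b hab
        simp only at hab
        by_cases ha : (a:ℕ) < s <;> by_cases hb : (b:ℕ) < s
        · rw [dif_pos ha, dif_pos hb] at hab
          exact congrArg Subtype.val (e1.injective (Subtype.ext hab))
        · rw [dif_pos ha, dif_neg hb] at hab
          by_cases hb' : s < (b:ℕ)
          · rw [dif_pos hb'] at hab
            exact absurd ((e1 ⟨a, ha⟩).2) (hab ▸ hST _ (e2 ⟨b, hb'⟩).2)
          · rw [dif_neg hb'] at hab
            exact absurd ((e1 ⟨a, ha⟩).2) (hab ▸ hiS)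
        · rw [dif_neg ha, dif_pos hb] at hab
          by_cases ha' : s < (a:ℕ)
          · rw [dif_pos ha'] at hab
            exact absurd ((e1 ⟨b, hb⟩).2) (hab ▸ hST _ (e2 ⟨a, ha'⟩).2)
          · rw [dif_neg ha'] at hab
            exact absurd ((e1 ⟨b, hb⟩).2) (hab.symm ▸ hiS)
        · rw [dif_neg ha, dif_neg hb] at hab
          by_cases ha' : s < (a:ℕ) <;> by_cases hb' : s < (b:ℕ)
          · rw [dif_pos ha', dif_pos hb'] at hab
            have : (⟨a, ha'⟩ : {a : Fin n // s < (a:ℕ)}) = ⟨b, hb'⟩ := e2.injective (Subtype.ext hab)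
            exact congrArg Subtype.val this
          · rw [dif_pos ha', dif_neg hb'] at hab
            exact absurd ((e2 ⟨a, ha'⟩).2 : _ ∈ T) (by rw [hab]; exact hiT)
          · rw [dif_neg ha', dif_pos hb'] at hab
            exact absurd ((e2 ⟨b, hb'⟩).2 : _ ∈ T) (by rw [← hab]; exact hiT)
          · exact Fin.ext (by omega)
      refine ⟨Equiv.ofBijective _ (Finite.injective_iff_bijective.mp finj), ?_, ?_⟩
      · rw [Equiv.symm_apply_eq]
        show i = if h : (k0:ℕ) < s then _ else _
        rw [dif_neg (by simp [hk0]), dif_neg (by simp [hk0])]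
      · intro j hj
        show (if h : (j:ℕ) < s then (e1 ⟨j, h⟩ : Fin n) else _) ∈ S
        rw [dif_pos hj]
        exact (e1 ⟨j, hj⟩).2
    · rintro ⟨π, hπ⟩
      apply Subtype.ext
      apply Equiv.ext
      intro j
      show (if h : (j:ℕ) < s then _ else if h' : s < (j:ℕ) then _ else i) = π j
      by_cases h : (j:ℕ) < s
      · rw [dif_pos h]; rfl
      · rw [dif_neg h]
        by_cases h' : s < (j:ℕ)
        · rw [dif_pos h']; rfl
        · rw [dif_neg h']
          have : j = k0 := Fin.ext (show (j:ℕ) = s by omega)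
          rw [this, hPk0 π hπ]
    · rintro ⟨e1, e2⟩
      apply Prod.ext
      · apply Equiv.ext
        intro a
        apply Subtype.ext
        show (if h : (a.1:ℕ) < s then (e1 ⟨a.1, h⟩ : Fin n) else _) = (e1 a : Fin n)
        rw [dif_pos a.2]
      · apply Equiv.ext
        intro a
        apply Subtype.ext
        show (if h : (a.1:ℕ) < s then _ else if h' : s < (a.1:ℕ) then (e2 ⟨a.1, h'⟩ : Fin n) else i)
          = (e2 a : Fin n)
        rw [dif_neg (by have := a.2; omega), dif_pos a.2]
  -- conclude
  have hfilter_eq : (Finset.univ.filter (fun π : Equiv.Perm (Fin n) =>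
        (Finset.univ.filter fun j' : Fin n => (j' : ℕ) < ((π.symm i : Fin n) : ℕ)).image π = S))
      = Finset.univ.filter P := Finset.filter_congr (fun π _ => hchar π)
  rw [hfilter_eq, ← Fintype.card_subtype, Fintype.card_congr Φ, Fintype.card_prod,
    Fintype.card_equiv (Fintype.equivOfCardEq (cA1.trans cB1.symm)),
    Fintype.card_equiv (Fintype.equivOfCardEq (cA2.trans cB2.symm)), cA1, cA2]

end Aux


lemma stop_char {Ω : Type*} {n : ℕ} (V : Fin n → Ω → ℝ) (τ0 : ℝ)
    (σ : Ω → Equiv.Perm (Fin n)) (ω : Ω) (π : Equiv.Perm (Fin n)) (hσ : σ ω = π) (i : Fin n) :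
    ((∃ j : Fin n, (j : ℕ) + 1 = stopT V (fun _ => τ0) σ ω ∧ σ ω j = i) ∧ τ0 < V i ω)
    ↔ (τ0 < V i ω ∧ ∀ j' : Fin n, (j' : ℕ) < ((π.symm i : Fin n) : ℕ) → V (π j') ω ≤ τ0) := by
  have hstop : stopT V (fun _ => τ0) σ ω
      = sInf ({k : ℕ | ∃ j : Fin n, (j : ℕ) + 1 = k ∧ τ0 < V (π j) ω} ∪ {n + 1}) := by
    rw [stopT, hσ]
  set Sset : Set ℕ := {k : ℕ | ∃ j : Fin n, (j : ℕ) + 1 = k ∧ τ0 < V (π j) ω} ∪ {n + 1} with hSset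
  have hne : Sset.Nonempty := ⟨n + 1, Or.inr rfl⟩
  constructor
  · rintro ⟨⟨j, hj, hji⟩, hVi⟩
    rw [hσ] at hji
    have hjsymm : j = π.symm i := by rw [← hji, Equiv.symm_apply_apply]
    refine ⟨hVi, fun j' hj' => ?_⟩
    by_contra hcon
    push_neg at hcon
    have hmem : (j' : ℕ) + 1 ∈ Sset := Or.inl ⟨j', rfl, hcon⟩
    have := Nat.sInf_le hmem
    rw [← hstop, ← hj] at this
    omega
  · rintro ⟨hVi, hall⟩
    set j : Fin n := π.symm i with hj
    have hmem : (j : ℕ) + 1 ∈ Sset := Or.inl ⟨j, rfl, by rw [hj, Equiv.apply_symm_apply]; exact hVi⟩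
    have hlb : ∀ k ∈ Sset, (j : ℕ) + 1 ≤ k := by
      rintro k (⟨j'', hj'', hV⟩ | hk)
      · by_contra hcon
        have : (j'' : ℕ) < (j : ℕ) := by omega
        exact absurd hV (not_lt.mpr (hall j'' this))
      · have := j.isLt
        simp only [Set.mem_singleton_iff] at hk
        omega
    have : sInf Sset = (j : ℕ) + 1 :=
      le_antisymm (Nat.sInf_le hmem) (le_csInf hne hlb)
    exact ⟨⟨j, by rw [hstop, this], by rw [hσ, hj, Equiv.apply_symm_apply]⟩, hVi⟩

lemma meas_prod {Ω : Type*} [MeasurableSpace Ω] (μ : Measure Ω) [IsProbabilityMeasure μ]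
    {n : ℕ} (V : Fin n → Ω → ℝ) (hVmeas : ∀ i, Measurable (V i))
    (hVindep : iIndepFun V μ) (τ0 : ℝ) (i : Fin n)
    (π : Equiv.Perm (Fin n)) :
    μ {ω | τ0 < V i ω ∧ ∀ j' : Fin n, (j' : ℕ) < ((π.symm i : Fin n) : ℕ) → V (π j') ω ≤ τ0}
      = μ {ω | τ0 < V i ω}
        * ∏ j ∈ (Finset.univ.filter fun j' : Fin n =>
            (j' : ℕ) < ((π.symm i : Fin n) : ℕ)).image π, μ {ω | V j ω ≤ τ0} := by
  classical
  set B := (Finset.univ.filter fun j' : Fin n => (j' : ℕ) < ((π.symm i : Fin n) : ℕ)).image π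
    with hB
  have hiB : i ∉ B := by
    intro hcon
    obtain ⟨j', hj', hj'i⟩ := Finset.mem_image.mp hcon
    rw [Finset.mem_filter] at hj'
    have : j' = π.symm i := by rw [← hj'i, Equiv.symm_apply_apply]
    rw [this] at hj'
    omega
  set sets : Fin n → Set ℝ := fun j => if j = i then Set.Ioi τ0 else Set.Iic τ0 with hsets
  have hmeas : ∀ j : Fin n, j ∈ insert i B → MeasurableSet (sets j) := by
    intro j _
    by_cases h : j = i <;> simp [hsets, h, measurableSet_Ioi, measurableSet_Iic]
  have hset : {ω | τ0 < V i ω ∧ ∀ j' : Fin n, (j' : ℕ) < ((π.symm i : Fin n) : ℕ) → V (π j') ω ≤ τ0}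
      = ⋂ j ∈ (insert i B : Finset (Fin n)), V j ⁻¹' sets j := by
    ext ω
    simp only [Set.mem_setOf_eq, Set.mem_iInter, Finset.mem_insert]
    constructor
    · rintro ⟨h1, h2⟩ j hj
      rcases hj with rfl | hj
      · simpa [hsets] using h1
      · have hji : j ≠ i := fun hcon => hiB (hcon ▸ hj)
        obtain ⟨j', hj', hj'j⟩ := Finset.mem_image.mp hj
        rw [Finset.mem_filter] at hj'
        have := h2 j' hj'.2
        simp only [hsets, Set.mem_preimage, if_neg hji, Set.mem_Iic]
        rw [← hj'j] at *
        exact this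
    · intro h
      constructor
      · have := h i (Or.inl rfl)
        simpa [hsets] using this
      · intro j' hj'
        have hmem : π j' ∈ B := Finset.mem_image_of_mem π (Finset.mem_filter.mpr ⟨Finset.mem_univ _, hj'⟩)
        have hne : π j' ≠ i := fun hcon => hiB (hcon ▸ hmem)
        have := h (π j') (Or.inr hmem)
        simpa [hsets, if_neg hne] using this
  rw [hset, hVindep.measure_inter_preimage_eq_mul (insert i B) hmeas, Finset.prod_insert hiB]
  congr 1
  · congr 1
    simp [hsets]
    rfl
  · refine Finset.prod_congr rfl fun j hj => ?_
    have hne : j ≠ i := fun hcon => hiB (hcon ▸ hj)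
    congr 1
    simp [hsets, if_neg hne]
    rfl

theorem stmt9 {Ω : Type*} [MeasurableSpace Ω] (μ : Measure Ω) [IsProbabilityMeasure μ]
    (n : ℕ) (hn : 0 < n) (V : Fin n → Ω → ℝ)
    (hVmeas : ∀ i, Measurable (V i))
    (hVnonneg : ∀ i ω, 0 ≤ V i ω)
    (hVindep : iIndepFun V μ)
    (σ : Ω → Equiv.Perm (Fin n))
    (hσmeas : ∀ π, MeasurableSet {ω | σ ω = π})
    (hσunif : ∀ π, μ {ω | σ ω = π} = ((n.factorial : ENNReal))⁻¹)
    (hindep : ∀ (π : Equiv.Perm (Fin n)) (A : Set (Fin n → ℝ)), MeasurableSet A →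
      μ ({ω | σ ω = π} ∩ {ω | (fun i => V i ω) ∈ A})
        = μ {ω | σ ω = π} * μ {ω | (fun i => V i ω) ∈ A})
    (τ0 : ℝ)
    (F : Fin n → ℝ) (hF : ∀ j, F j = (μ {ω | V j ω ≤ τ0}).toReal)
    (hFpos : ∀ j, 0 < F j)
    (p : ℝ) (hp : p = ∏ j, F j)
    (i : Fin n) (hi : 0 < (μ {ω | τ0 < V i ω}).toReal) :
    (μ ({ω | ∃ j : Fin n, (j : ℕ) + 1 = stopT V (fun _ => τ0) σ ω ∧ σ ω j = i}
          ∩ {ω | τ0 < V i ω})).toReal / (μ {ω | τ0 < V i ω}).toReal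
      = (p / F i) * ∑ S ∈ (Finset.univ.erase i).powerset,
          (1 / (S.card + 1) : ℝ) * ∏ j ∈ S, (1 - F j) / F j := by
  classical
  set E := {ω | ∃ j : Fin n, (j : ℕ) + 1 = stopT V (fun _ => τ0) σ ω ∧ σ ω j = i}
      ∩ {ω | τ0 < V i ω} with hE
  set q := μ {ω | τ0 < V i ω} with hq
  set Gm : Fin n → ENNReal := fun j => μ {ω | V j ω ≤ τ0} with hGm
  set Bfin : Equiv.Perm (Fin n) → Finset (Fin n) := fun π =>
    (Finset.univ.filter fun j' : Fin n => (j' : ℕ) < ((π.symm i : Fin n) : ℕ)).image π with hBfin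
  set Aset : Equiv.Perm (Fin n) → Set (Fin n → ℝ) := fun π =>
    {v | τ0 < v i ∧ ∀ j' : Fin n, (j' : ℕ) < ((π.symm i : Fin n) : ℕ) → v (π j') ≤ τ0} with hAset
  have hAmeas : ∀ π, MeasurableSet (Aset π) := by
    intro π
    have : Aset π = ((fun v : Fin n → ℝ => v i) ⁻¹' Set.Ioi τ0) ∩
        ⋂ j' : Fin n, ⋂ (_ : (j' : ℕ) < ((π.symm i : Fin n) : ℕ)),
          ((fun v : Fin n → ℝ => v (π j')) ⁻¹' Set.Iic τ0) := by
      ext v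
      simp only [hAset, Set.mem_setOf_eq, Set.mem_inter_iff, Set.mem_preimage, Set.mem_Ioi,
        Set.mem_Iic, Set.mem_iInter]
    rw [this]
    exact ((measurable_pi_apply i) measurableSet_Ioi).inter
      (MeasurableSet.iInter fun j' => MeasurableSet.iInter fun _ =>
        (measurable_pi_apply (π j')) measurableSet_Iic)
  have hsplit : ∀ π : Equiv.Perm (Fin n),
      {ω | σ ω = π} ∩ E = {ω | σ ω = π} ∩ {ω | (fun k => V k ω) ∈ Aset π} := by
    intro π
    ext ω
    simp only [Set.mem_inter_iff, Set.mem_setOf_eq, hE, hAset]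
    constructor
    · rintro ⟨hσω, h1, h2⟩
      exact ⟨hσω, (stop_char V τ0 σ ω π hσω i).mp ⟨h1, h2⟩⟩
    · rintro ⟨hσω, h⟩
      obtain ⟨h1, h2⟩ := (stop_char V τ0 σ ω π hσω i).mpr h
      exact ⟨hσω, h1, h2⟩
  have hπmeas : ∀ π : Equiv.Perm (Fin n),
      μ ({ω | σ ω = π} ∩ E) = (n.factorial : ENNReal)⁻¹ * (q * ∏ j ∈ Bfin π, Gm j) := by
    intro π
    rw [hsplit π, hindep π (Aset π) (hAmeas π), hσunif π]
    congr 1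
    have : {ω | (fun k => V k ω) ∈ Aset π}
        = {ω | τ0 < V i ω ∧ ∀ j' : Fin n, (j' : ℕ) < ((π.symm i : Fin n) : ℕ) → V (π j') ω ≤ τ0} :=
      rfl
    rw [this, meas_prod μ V hVmeas hVindep τ0 i π]
  have hEmeas : ∀ π : Equiv.Perm (Fin n), MeasurableSet ({ω | σ ω = π} ∩ E) := by
    intro π
    rw [hsplit π]
    exact (hσmeas π).inter ((measurable_pi_lambda _ fun k => hVmeas k) (hAmeas π))
  have hdecomp : μ E = ∑ π : Equiv.Perm (Fin n), μ ({ω | σ ω = π} ∩ E) := by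
    have hun : E = ⋃ π ∈ (Finset.univ : Finset (Equiv.Perm (Fin n))), ({ω | σ ω = π} ∩ E) := by
      ext ω
      simp only [Set.mem_iUnion, Finset.mem_univ, Set.mem_inter_iff, Set.mem_setOf_eq,
        exists_prop, true_and]
      exact ⟨fun h => ⟨σ ω, rfl, h⟩, fun ⟨π, _, h⟩ => h⟩
    have hdisj : (↑(Finset.univ : Finset (Equiv.Perm (Fin n))) : Set _).PairwiseDisjoint
        (fun π => {ω | σ ω = π} ∩ E) := by
      intro π _ π' _ hne
      simp only [Function.onFun]
      rw [Set.disjoint_left]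
      rintro ω ⟨h1, _⟩ ⟨h2, _⟩
      exact hne (h1 ▸ h2)
    have hsum := measure_biUnion_finset (μ := μ) hdisj (fun π _ => hEmeas π)
    rw [← hun] at hsum
    exact hsum
  -- toReal computation
  have hfact_ne : ((n.factorial : ENNReal))⁻¹ ≠ ⊤ :=
    ENNReal.inv_ne_top.mpr (by exact_mod_cast Nat.factorial_pos n |>.ne')
  have hterm_ne : ∀ π : Equiv.Perm (Fin n),
      (n.factorial : ENNReal)⁻¹ * (q * ∏ j ∈ Bfin π, Gm j) ≠ ⊤ := by
    intro π
    refine ENNReal.mul_ne_top hfact_ne (ENNReal.mul_ne_top (measure_ne_top μ _) ?_)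
    exact (ENNReal.prod_lt_top (fun j _ => (measure_lt_top μ _))).ne
  have htoReal : (μ E).toReal
      = ∑ π : Equiv.Perm (Fin n), ((n.factorial : ℝ))⁻¹ * (q.toReal * ∏ j ∈ Bfin π, F j) := by
    rw [hdecomp]
    rw [Finset.sum_congr rfl fun π _ => hπmeas π]
    rw [ENNReal.toReal_sum (fun π _ => hterm_ne π)]
    refine Finset.sum_congr rfl fun π _ => ?_
    rw [ENNReal.toReal_mul, ENNReal.toReal_mul, ENNReal.toReal_inv, ENNReal.toReal_prod]
    have h1 : ((n.factorial : ENNReal)).toReal = (n.factorial : ℝ) := by simp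
    have h2 : ∀ j ∈ Bfin π, (Gm j).toReal = F j := fun j _ => (hF j).symm
    rw [h1, Finset.prod_congr rfl h2]
  set C : ℝ := ∑ π : Equiv.Perm (Fin n), ((n.factorial : ℝ))⁻¹ * ∏ j ∈ Bfin π, F j with hC
  have hEq : (μ E).toReal = q.toReal * C := by
    rw [htoReal, hC, Finset.mul_sum]
    exact Finset.sum_congr rfl fun π _ => by ring
  have hLHS : (μ E).toReal / q.toReal = C := by
    rw [hEq, mul_div_cancel_left₀ _ (ne_of_gt hi)]
  rw [hLHS]
  -- now the combinatorial part
  have hBsub : ∀ π : Equiv.Perm (Fin n), Bfin π ∈ (Finset.univ.erase i).powerset := by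
    intro π
    rw [Finset.mem_powerset]
    intro x hx
    obtain ⟨j', hj', hj'x⟩ := Finset.mem_image.mp hx
    rw [Finset.mem_filter] at hj'
    rw [Finset.mem_erase]
    refine ⟨?_, Finset.mem_univ _⟩
    intro hcon
    rw [hcon] at hj'x
    have : j' = π.symm i := by rw [← hj'x, Equiv.symm_apply_apply]
    rw [this] at hj'
    omega
  have hCsum : C = ∑ S ∈ (Finset.univ.erase i).powerset,
      ((S.card.factorial * (n - 1 - S.card).factorial : ℝ) / (n.factorial : ℝ)) * ∏ j ∈ S, F j := by
    rw [hC, ← Finset.sum_fiberwise_of_maps_to (fun π _ => hBsub π)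
      (fun π => ((n.factorial : ℝ))⁻¹ * ∏ j ∈ Bfin π, F j)]
    refine Finset.sum_congr rfl fun S hS => ?_
    have : ∀ π ∈ Finset.univ.filter (fun π : Equiv.Perm (Fin n) => Bfin π = S),
        ((n.factorial : ℝ))⁻¹ * ∏ j ∈ Bfin π, F j = ((n.factorial : ℝ))⁻¹ * ∏ j ∈ S, F j := by
      intro π hπ
      rw [(Finset.mem_filter.mp hπ).2]
    rw [Finset.sum_congr rfl this, Finset.sum_const, fiberCard i S (Finset.mem_powerset.mp hS),
      nsmul_eq_mul]
    push_cast
    ring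
  rw [hCsum]
  -- apply the integral identity
  have hGcard : (Finset.univ.erase i).card = n - 1 := by
    rw [Finset.card_erase_of_mem (Finset.mem_univ i), Finset.card_univ, Fintype.card_fin]
  have hcomb := combIdent (Finset.univ.erase i) F
  rw [hGcard] at hcomb
  have hn1 : n - 1 + 1 = n := by omega
  rw [hn1] at hcomb
  rw [hcomb]
  -- final algebra
  rw [Finset.mul_sum]
  refine Finset.sum_congr rfl fun S hS => ?_
  have hSsub : S ⊆ Finset.univ.erase i := Finset.mem_powerset.mp hS
  have hpFi : p / F i = ∏ j ∈ Finset.univ.erase i, F j := by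
    rw [hp, ← Finset.mul_prod_erase Finset.univ F (Finset.mem_univ i), mul_comm]
    exact mul_div_cancel_right₀ _ (ne_of_gt (hFpos i))
  have hprod_split : ∏ j ∈ Finset.univ.erase i, F j
      = (∏ j ∈ Finset.univ.erase i \ S, F j) * ∏ j ∈ S, F j := (Finset.prod_sdiff hSsub).symm
  have hSF : ∏ j ∈ S, F j ≠ 0 := Finset.prod_ne_zero_iff.mpr fun j _ => ne_of_gt (hFpos j)
  have hdiv : ∏ j ∈ S, (1 - F j) / F j = (∏ j ∈ S, (1 - F j)) / ∏ j ∈ S, F j :=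
    Finset.prod_div_distrib _ _
  rw [hpFi, hprod_split, hdiv]
  field_simp
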